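/- Let V be a finite-dimensional vector space over a field κ, and let (I_a)_{a∈ℝ} be an increasing and (I^b)_{b∈ℝ} a decreasing family of subspaces of V. Then dim((I_a ∩ I^b)/(I_{<a} ∩ I^b + I_a ∩ I^{>b})) is nonzero for only finitely many pairs (a,b), and Σ_{(a,b)} dim δ(a,b) ≤ dim V. -/

import Mathlib

open Module

/-- For `V` finite-dimensional, `dim δ(a,b)` is nonzero for only finitely many pairs
`(a,b)`, and the total sum of these dimensions is at most `dim V`. -/
theorem stmt_14 {κ V : Type*} [Field κ] [AddCommGroup V] [Module κ V]
    [FiniteDimensional κ V]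
    (I J : ℝ → Submodule κ V) (hI : Monotone I) (hJ : Antitone J)
    (d : ℝ → ℝ → ℕ)
    (hd : ∀ a b : ℝ, d a b =
      finrank κ (↥(I a ⊓ J b) ⧸
        (((⨆ a' : ℝ, ⨆ _ : a' < a, I a') ⊓ J b) ⊔
          (I a ⊓ ⨆ b' : ℝ, ⨆ _ : b < b', J b')).comap (I a ⊓ J b).subtype)) :
    {p : ℝ × ℝ | d p.1 p.2 ≠ 0}.Finite ∧
    ∀ t : Finset (ℝ × ℝ), ∑ p ∈ t, d p.1 p.2 ≤ finrank κ V := by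
  set Ilt : ℝ → Submodule κ V := fun a => ⨆ a' : ℝ, ⨆ _ : a' < a, I a' with hIlt_def
  set Jgt : ℝ → Submodule κ V := fun b => ⨆ b' : ℝ, ⨆ _ : b < b', J b' with hJgt_def
  have hIlt : ∀ a, Ilt a ≤ I a := fun a => iSup₂_le fun a' h => hI h.le
  have hJgt : ∀ b, Jgt b ≤ J b := fun b => iSup₂_le fun b' h => hJ h.le
  have hIlt' : ∀ {a' a : ℝ}, a' < a → I a' ≤ Ilt a := fun {a' a} h =>
    le_iSup₂_of_le a' h le_rfl
  have hJgt' : ∀ {b b' : ℝ}, b < b' → J b' ≤ Jgt b := fun {b b'} h =>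
    le_iSup₂_of_le b' h le_rfl
  set N : ℝ × ℝ → Submodule κ V := fun p => I p.1 ⊓ J p.2 with hN_def
  set D : ℝ × ℝ → Submodule κ V := fun p => (Ilt p.1 ⊓ J p.2) ⊔ (I p.1 ⊓ Jgt p.2)
    with hD_def
  have hDN : ∀ p, D p ≤ N p := fun p =>
    sup_le (inf_le_inf_right _ (hIlt _)) (inf_le_inf_left _ (hJgt _))
  -- choose complements
  have hW : ∀ p : ℝ × ℝ, ∃ W : Submodule κ V,
      W ≤ N p ∧ W ⊓ D p = ⊥ ∧ finrank κ ↥W = d p.1 p.2 := by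
    intro p
    obtain ⟨U, hU⟩ := Submodule.exists_isCompl ((D p).comap (N p).subtype)
    refine ⟨U.map (N p).subtype, Submodule.map_subtype_le _ _, ?_, ?_⟩
    · have hDmap : ((D p).comap (N p).subtype).map (N p).subtype = D p := by
        rw [Submodule.map_comap_subtype, inf_eq_right.2 (hDN p)]
      rw [← hDmap, ← Submodule.map_inf _ (N p).injective_subtype,
        (disjoint_iff.1 hU.symm.disjoint), Submodule.map_bot]
    · rw [Submodule.finrank_map_subtype_eq, hd p.1 p.2]
      exact ((Submodule.quotientEquivOfIsCompl _ _ hU).finrank_eq).symm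
  choose W hWN hWD hWrank using hW
  -- main estimate
  have key : ∀ t : Finset (ℝ × ℝ),
      ∑ p ∈ t, d p.1 p.2 ≤ finrank κ ↥(t.sup W) := by
    intro t
    induction t using Finset.strongInduction with
    | _ t ih =>
      rcases t.eq_empty_or_nonempty with rfl | ht
      · simp
      obtain ⟨q, hq, hqmax⟩ := t.exists_max_image
        (fun p => toLex (p.1, OrderDual.toDual p.2)) ht
      have hsup : (t.erase q).sup W ≤ Ilt q.1 ⊔ (I q.1 ⊓ Jgt q.2) := by
        refine Finset.sup_le fun p hp => ?_
        have hpq : p ≠ q := Finset.ne_of_mem_erase hp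
        have := hqmax p (Finset.mem_of_mem_erase hp)
        rw [Prod.Lex.le_iff] at this
        rcases this with h1 | ⟨h1, h2⟩
        · exact le_sup_of_le_left ((hWN p).trans (inf_le_left.trans (hIlt' h1)))
        · have h2' : q.2 < p.2 := by
            rcases lt_or_eq_of_le (OrderDual.toDual_le_toDual.1 h2) with h | h
            · exact h
            · exact absurd (Prod.ext h1 h.symm) hpq
          refine le_sup_of_le_right ((hWN p).trans (inf_le_inf ?_ (hJgt' h2')))
          rw [show p.1 = q.1 from h1]
      have hdisj : W q ⊓ (t.erase q).sup W = ⊥ := by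
        refine le_bot_iff.1 ?_
        have h1 : W q ⊓ (t.erase q).sup W ≤ N q ⊓ (Ilt q.1 ⊔ (I q.1 ⊓ Jgt q.2)) :=
          inf_le_inf (hWN q) hsup
        have h2 : N q ⊓ (Ilt q.1 ⊔ (I q.1 ⊓ Jgt q.2)) = D q := by
          rw [sup_comm, inf_comm,
            sup_inf_assoc_of_le _ (inf_le_inf_left _ (hJgt q.2) : I q.1 ⊓ Jgt q.2 ≤ N q)]
          have : Ilt q.1 ⊓ N q = Ilt q.1 ⊓ J q.2 := by
            rw [hN_def, ← inf_assoc, inf_eq_left.2 (hIlt q.1)]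
          rw [this, hD_def, sup_comm]
        rw [← hWD q]
        exact le_inf inf_le_left (h1.trans h2.le)
      have herase : t.sup W = W q ⊔ (t.erase q).sup W := by
        conv_lhs => rw [← Finset.insert_erase hq]
        rw [Finset.sup_insert]
      calc ∑ p ∈ t, d p.1 p.2
          = d q.1 q.2 + ∑ p ∈ t.erase q, d p.1 p.2 := (Finset.add_sum_erase t _ hq).symm
        _ ≤ finrank κ ↥(W q) + finrank κ ↥((t.erase q).sup W) := by
            rw [hWrank q]
            exact Nat.add_le_add_left (ih _ (Finset.erase_ssubset hq)) _
        _ = finrank κ ↥(W q ⊔ (t.erase q).sup W)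
              + finrank κ ↥(W q ⊓ (t.erase q).sup W) :=
            (Submodule.finrank_sup_add_finrank_inf_eq _ _).symm
        _ = finrank κ ↥(t.sup W) := by
            rw [hdisj, herase]; simp
  have main : ∀ t : Finset (ℝ × ℝ), ∑ p ∈ t, d p.1 p.2 ≤ finrank κ V :=
    fun t => (key t).trans (Submodule.finrank_le _)
  refine ⟨?_, main⟩
  by_contra hfin
  obtain ⟨t, hts, htcard⟩ :=
    Set.Infinite.exists_subset_card_eq hfin (finrank κ V + 1)
  have h1 : t.card • 1 ≤ ∑ p ∈ t, d p.1 p.2 :=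
    Finset.card_nsmul_le_sum t _ 1 fun p hp => Nat.one_le_iff_ne_zero.2 (hts hp)
  rw [htcard, smul_eq_mul, mul_one] at h1
  exact absurd (main t) (by omega)
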